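/- Let p be a prime, L a field of characteristic p, and f a nonzero polynomial in the maximal ideal m = (x_1,…,x_n) of L[x_1,…,x_n] which is homogeneous of degree d under an ℕ-grading with deg x_i = w_i > 0. Then the F-pure threshold of f satisfies fpt(f) ≤ min{(Σ w_i)/d, 1}. -/

import Mathlib

open MvPolynomial

/-- The `e`-th truncation of the non-terminating base `p` expansion of `α ∈ (0,1]`:
the unique multiple of `p^{-e}` with `⟨α⟩_e < α ≤ ⟨α⟩_e + p^{-e}`
(with the convention `⟨α⟩_e = 0` for `α ≤ 0`). -/
noncomputable def trunc (p e : ℕ) (α : ℝ) : ℝ :=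
  if α ≤ 0 then 0 else (⌈α * (p : ℝ) ^ e⌉ - 1) / (p : ℝ) ^ e

/-- The `e`-th digit (`e ≥ 1`) of the non-terminating base `p` expansion of `α ∈ (0,1]`,
namely `p^e ⟨α⟩_e - p^e ⟨α⟩_{e-1}`. -/
noncomputable def digit (p e : ℕ) (α : ℝ) : ℤ :=
  (⌈α * (p : ℝ) ^ e⌉ - 1) - p * (⌈α * (p : ℝ) ^ (e - 1)⌉ - 1)

/-- Least positive residue of `m` modulo `b`: the unique `r` with `1 ≤ r ≤ b`, `r ≡ m (mod b)`. -/
def lpr (m b : ℤ) : ℤ := if m % b = 0 then b else m % b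

/-- The `e`-th Frobenius power `m^{[p^e]} = (x_1^{p^e}, …, x_n^{p^e})`. -/
noncomputable def frobPow (p n : ℕ) (K : Type*) [Field K] (e : ℕ) :
    Ideal (MvPolynomial (Fin n) K) :=
  Ideal.span (Set.range fun i => (X i : MvPolynomial (Fin n) K) ^ p ^ e)

/-- `ν_f(p^e) = max { N | f^N ∉ m^{[p^e]} }`. -/
noncomputable def nu (p : ℕ) {n : ℕ} {K : Type*} [Field K]
    (f : MvPolynomial (Fin n) K) (e : ℕ) : ℕ :=
  sSup {N : ℕ | f ^ N ∉ frobPow p n K e}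

/-- The F-pure threshold `fpt(f) = lim_e ν_f(p^e)/p^e`; since the sequence is
non-decreasing and bounded, the limit equals the supremum. -/
noncomputable def fpt (p : ℕ) {n : ℕ} {K : Type*} [Field K]
    (f : MvPolynomial (Fin n) K) : ℝ :=
  ⨆ e : ℕ, (nu p f e : ℝ) / (p : ℝ) ^ e

/-- The maximal ideal `m = (x_1, …, x_n)`. -/
noncomputable def mIdeal (n : ℕ) (K : Type*) [Field K] : Ideal (MvPolynomial (Fin n) K) :=
  Ideal.span (Set.range (X : Fin n → MvPolynomial (Fin n) K))

section aux
variable (p : ℕ) (n : ℕ) (K : Type*) [Field K]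

lemma mIdeal_le_ker :
    mIdeal n K ≤ RingHom.ker (constantCoeff : MvPolynomial (Fin n) K →+* K) := by
  rw [mIdeal, Ideal.span_le]
  rintro _ ⟨i, rfl⟩
  simp [RingHom.mem_ker]

lemma one_not_mem_frobPow (hp : 0 < p) (e : ℕ) :
    (1 : MvPolynomial (Fin n) K) ∉ frobPow p n K e := by
  intro h
  have hle : frobPow p n K e ≤
      RingHom.ker (constantCoeff : MvPolynomial (Fin n) K →+* K) := by
    rw [frobPow, Ideal.span_le]
    rintro _ ⟨i, rfl⟩
    simp [RingHom.mem_ker, zero_pow (pow_ne_zero e hp.ne')]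
  simpa using hle h

lemma pow_mem_frobPow (hp : p.Prime) [CharP K p] (e : ℕ) {f : MvPolynomial (Fin n) K}
    (hf : f ∈ mIdeal n K) : f ^ p ^ e ∈ frobPow p n K e := by
  haveI : Fact p.Prime := ⟨hp⟩
  have h := Ideal.mem_map_of_mem (iterateFrobenius (MvPolynomial (Fin n) K) p e) hf
  rw [mIdeal, Ideal.map_span, ← Set.range_comp] at h
  have heq : f ^ p ^ e = iterateFrobenius (MvPolynomial (Fin n) K) p e f := by
    rw [iterateFrobenius_def]
  rw [heq]
  refine Ideal.span_le.mpr ?_ h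
  rintro _ ⟨i, rfl⟩
  exact Ideal.subset_span ⟨i, rfl⟩

lemma mem_frobPow_of_support (e : ℕ) {g : MvPolynomial (Fin n) K}
    (h : ∀ a ∈ g.support, ∃ i, p ^ e ≤ a i) : g ∈ frobPow p n K e := by
  rw [← support_sum_monomial_coeff g]
  refine Ideal.sum_mem _ fun a ha => ?_
  obtain ⟨i, hi⟩ := h a ha
  have key : monomial a (coeff a g) =
      monomial (a - Finsupp.single i (p ^ e)) (coeff a g) * X i ^ p ^ e := by
    rw [X_pow_eq_monomial, monomial_mul, mul_one,
      tsub_add_cancel_of_le (Finsupp.single_le_iff.mpr hi)]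
  rw [key]
  exact Ideal.mul_mem_left _ _ (Ideal.subset_span ⟨i, rfl⟩)

lemma isWeightedHomogeneous_pow {w : Fin n → ℕ} {d : ℕ} {f : MvPolynomial (Fin n) K}
    (hf : f.IsWeightedHomogeneous w d) (N : ℕ) :
    (f ^ N).IsWeightedHomogeneous w (N * d) := by
  induction N with
  | zero => simpa using isWeightedHomogeneous_one K w
  | succ k ih =>
      rw [pow_succ, add_mul, one_mul]
      exact ih.mul hf
end aux


/-- `fpt(f) ≤ min{(Σ w_i)/d, 1}` for a nonzero weighted-homogeneous
`f ∈ m` of degree `d`. -/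
theorem stmt_9 (p : ℕ) (hp : p.Prime) (n : ℕ) (K : Type*) [Field K] [CharP K p]
    (w : Fin n → ℕ) (hw : ∀ i, 0 < w i) (d : ℕ)
    (f : MvPolynomial (Fin n) K) (hf0 : f ≠ 0)
    (hfh : f.IsWeightedHomogeneous w d)
    (hfm : f ∈ mIdeal n K) :
    fpt p f ≤ min ((∑ i, (w i : ℝ)) / d) 1 := by
  have hp0 : 0 < p := hp.pos
  have hc0 : constantCoeff f = 0 := mIdeal_le_ker n K hfm
  -- d > 0
  have hd : 0 < d := by
    rcases Nat.eq_zero_or_pos d with hd0 | hd0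
    · exfalso
      obtain ⟨a, ha⟩ := support_nonempty.mpr hf0
      have hwa : Finsupp.weight w a = d := hfh (mem_support_iff.mp ha)
      have ha0 : a = 0 := by
        ext i
        simp only [Finsupp.coe_zero, Pi.zero_apply]
        have := Finsupp.le_weight w (hw i).ne' a
        omega
      rw [ha0] at ha
      have : coeff 0 f = 0 := hc0
      exact mem_support_iff.mp ha this
    · exact hd0
  refine ciSup_le fun e => ?_
  set S : Set ℕ := {N : ℕ | f ^ N ∉ frobPow p n K e} with hS
  have hSne : S.Nonempty := ⟨0, by show f ^ 0 ∉ frobPow p n K e; simpa using one_not_mem_frobPow p n K hp0 e⟩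
  have hSbdd : ∀ N ∈ S, N < p ^ e := by
    intro N hN
    by_contra hlt
    push_neg at hlt
    apply hN
    have : f ^ N = f ^ p ^ e * f ^ (N - p ^ e) := by
      rw [← pow_add]; congr 1; omega
    rw [this]
    exact Ideal.mul_mem_right _ _ (pow_mem_frobPow p n K hp e hfm)
  have hmem : nu p f e ∈ S :=
    Nat.sSup_mem hSne ⟨p ^ e, fun N hN => (hSbdd N hN).le⟩
  set N := nu p f e with hNdef
  have hNlt : N < p ^ e := hSbdd N hmem
  have hpe : (0:ℝ) < (p:ℝ) ^ e := by positivity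
  -- key degree bound : N * d ≤ (p^e - 1) * ∑ w
  have hkey : N * d ≤ (p ^ e - 1) * ∑ i, w i := by
    have hnot : ¬ ∀ a ∈ (f ^ N).support, ∃ i, p ^ e ≤ a i := by
      intro h
      exact hmem (mem_frobPow_of_support p n K e h)
    push_neg at hnot
    obtain ⟨a, ha, hai⟩ := hnot
    have hwa : Finsupp.weight w a = N * d := isWeightedHomogeneous_pow n K hfh N
      (mem_support_iff.mp ha)
    have h1 : (Finsupp.weight w a : ℕ) = ∑ i, a i * w i := by
      rw [Finsupp.weight_apply, Finsupp.sum_fintype]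
      · simp [smul_eq_mul]
      · intro i; simp
    calc N * d = ∑ i, a i * w i := by rw [← hwa, h1]
      _ ≤ ∑ i, (p ^ e - 1) * w i :=
          Finset.sum_le_sum fun i _ => Nat.mul_le_mul_right _ (by have := hai i; omega)
      _ = (p ^ e - 1) * ∑ i, w i := by rw [Finset.mul_sum]
  refine le_min ?_ ?_
  · rw [div_le_div_iff₀ hpe (by exact_mod_cast hd : (0:ℝ) < (d:ℝ))]
    have h2 : N * d ≤ (∑ i, w i) * p ^ e := by
      calc N * d ≤ (p ^ e - 1) * ∑ i, w i := hkey
        _ ≤ p ^ e * ∑ i, w i := Nat.mul_le_mul_right _ (by omega)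
        _ = (∑ i, w i) * p ^ e := Nat.mul_comm _ _
    exact_mod_cast h2
  · rw [div_le_one hpe]
    exact_mod_cast hNlt.le
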